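/- arXiv:1808.08058 — 3 statements merged into one kernel-verified Lean document; each statement's English description precedes it below -/
import Mathlib

section
/- For the generalized Lorenz–Krishnamurthy vector field with δ = 0 (so that u' = v' = w' = 0), the Lie derivative of φ(x,y,u,v,w) = (x + ε·u·v/(1+κ²))² + (y − κ·ε·u·v/(1+κ²))² along the vector field equals −2κ·φ; hence the singular approximation {x = −ε·u·v/(1+κ²), y = κ·ε·u·v/(1+κ²)} is a Darboux invariant manifold with cofactor −2κ. -/
/-- For the generalized Lorenz–Krishnamurthy system at δ = 0 (so u, v, w are
constant along the flow), the function
φ = (x + ε·u·v/(1+κ²))² + (y − κ·ε·u·v/(1+κ²))²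
is a Darboux invariant with cofactor −2κ: along any solution,
d/dt φ = −2κ·φ. -/
theorem LK_generalized_singular_approx_darboux (κ ε : ℝ) (x y u v w : ℝ → ℝ)
    (hx : ∀ t, HasDerivAt x (-(y t) - κ * x t) t)
    (hy : ∀ t, HasDerivAt y (x t + ε * u t * v t - κ * y t) t)
    (hu : ∀ t, HasDerivAt u 0 t)
    (hv : ∀ t, HasDerivAt v 0 t)
    (hw : ∀ t, HasDerivAt w 0 t) :
    ∀ t : ℝ, HasDerivAt
      (fun s => (x s + ε * u s * v s / (1 + κ ^ 2)) ^ 2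
              + (y s - κ * ε * u s * v s / (1 + κ ^ 2)) ^ 2)
      (-2 * κ * ((x t + ε * u t * v t / (1 + κ ^ 2)) ^ 2
               + (y t - κ * ε * u t * v t / (1 + κ ^ 2)) ^ 2)) t := by
  intro t
  have hden : (1 : ℝ) + κ ^ 2 ≠ 0 := by positivity
  have huv : HasDerivAt (fun s => ε * u s * v s / (1 + κ ^ 2)) 0 t := by
    have := (((hu t).const_mul ε).mul (hv t)).div_const (1 + κ ^ 2)
    simpa using this
  have h1 : HasDerivAt (fun s => (x s + ε * u s * v s / (1 + κ ^ 2)) ^ 2)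
      (2 * (x t + ε * u t * v t / (1 + κ ^ 2)) * ((-(y t) - κ * x t) + 0)) t := by
    have := ((hx t).fun_add huv).fun_pow 2
    simpa [mul_comm, mul_assoc, mul_left_comm] using this
  have h2 : HasDerivAt (fun s => (y s - κ * ε * u s * v s / (1 + κ ^ 2)) ^ 2)
      (2 * (y t - κ * ε * u t * v t / (1 + κ ^ 2)) *
        ((x t + ε * u t * v t - κ * y t) - κ * 0)) t := by
    have huv' : HasDerivAt (fun s => κ * ε * u s * v s / (1 + κ ^ 2)) (κ * 0) t := by
      have := huv.const_mul κ
      simpa [mul_div_assoc, mul_assoc] using this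
    have := ((hy t).fun_sub huv').fun_pow 2
    simpa [mul_comm, mul_assoc, mul_left_comm] using this
  have h := h1.fun_add h2
  refine h.congr_deriv ?_
  field_simp
  ring
end

section
/- Let φ : ℝⁿ → ℝ be C¹ and suppose there exists a continuous function k : ℝⁿ → ℝ with ∇φ(X)·V(X) = k(X)·φ(X) for all X, where V is a locally Lipschitz vector field. Then the zero set {X : φ(X) = 0} is invariant under the flow of V: any solution starting on it stays on it. -/
open Set

/-- Darboux invariance theorem: if φ is C¹ and ∇φ·V = k·φ for a continuous
cofactor k and a locally Lipschitz vector field V, then the zero set of φ is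
invariant under the flow of V. -/
theorem darboux_invariance (n : ℕ) (V : (Fin n → ℝ) → (Fin n → ℝ))
    (hV : LocallyLipschitz V)
    (φ : (Fin n → ℝ) → ℝ) (hφ : ContDiff ℝ 1 φ)
    (k : (Fin n → ℝ) → ℝ) (hk : Continuous k)
    (hDarboux : ∀ X, fderiv ℝ φ X (V X) = k X * φ X)
    (γ : ℝ → (Fin n → ℝ)) (hγ : ∀ t, HasDerivAt γ (V (γ t)) t)
    (h0 : φ (γ 0) = 0) :
    ∀ t : ℝ, φ (γ t) = 0 := by
  intro t₁
  set f : ℝ → ℝ := fun t => φ (γ t) with hf_def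
  have hγc : Continuous γ := by
    rw [continuous_iff_continuousAt]; exact fun t => (hγ t).continuousAt
  have hf' : ∀ t, HasDerivAt f (k (γ t) * f t) t := by
    intro t
    have h1 : HasFDerivAt φ (fderiv ℝ φ (γ t)) (γ t) :=
      (hφ.differentiable one_ne_zero (γ t)).hasFDerivAt
    have := h1.comp_hasDerivAt t (hγ t)
    rw [hDarboux (γ t)] at this; exact this
  set a : ℝ := -(|t₁| + 1) with ha_def
  set b : ℝ := |t₁| + 1 with hb_def
  have hab : a ≤ b := by
    have := abs_nonneg t₁; simp [ha_def, hb_def]; linarith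
  have ht₁ : t₁ ∈ Icc a b := by
    constructor
    · simp [ha_def]; linarith [neg_abs_le t₁]
    · simp [hb_def]; linarith [le_abs_self t₁]
  have h0mem : (0 : ℝ) ∈ Ioo a b := by
    constructor
    · simp [ha_def]; linarith [abs_nonneg t₁]
    · simp [hb_def]; linarith [abs_nonneg t₁]
  -- bound for k ∘ γ on the compact interval
  obtain ⟨C, hC⟩ := (isCompact_Icc (a := a) (b := b)).exists_bound_of_continuousOn
    ((hk.comp hγc).continuousOn)
  have hC0 : 0 ≤ C := le_trans (norm_nonneg _) (hC a ⟨le_refl a, hab⟩)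
  set c : ℝ → ℝ := fun t => k (γ (projIcc a b hab t)) with hc_def
  have hcb : ∀ t, |c t| ≤ C := fun t => hC _ (projIcc a b hab t).2
  set v : ℝ → ℝ → ℝ := fun t x => c t * x with hv_def
  have hv : ∀ t, LipschitzOnWith (Real.toNNReal C) (v t) (univ : Set ℝ) := by
    intro t
    apply LipschitzOnWith.of_dist_le_mul
    intro x _ y _
    have : dist (v t x) (v t y) = |c t| * dist x y := by
      simp [hv_def, Real.dist_eq, ← mul_sub, abs_mul]
    rw [this, Real.coe_toNNReal C hC0]
    exact mul_le_mul_of_nonneg_right (hcb t) dist_nonneg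
  have key : EqOn f (fun _ => (0 : ℝ)) (Icc a b) := by
    apply ODE_solution_unique_of_mem_Icc (v := v) (s := fun _ => univ) (fun t _ => hv t) h0mem
    · exact (Continuous.comp (hφ.continuous) hγc).continuousOn
    · intro t ht
      have : v t (f t) = k (γ t) * f t := by
        simp [hv_def, hc_def, projIcc_of_mem hab (Ioo_subset_Icc_self ht)]
      rw [this]; exact hf' t
    · intro t _; trivial
    · exact continuousOn_const
    · intro t ht
      have : v t (0 : ℝ) = 0 := by simp [hv_def]
      rw [this]; exact hasDerivAt_const t 0
    · intro t _; trivial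
    · exact h0
  exact key ht₁
end

section
/- Suppose Y : ℝᵖ → ℝᵐ is C¹ and satisfies the invariance PDE DY(x)·g(x, Y(x)) = f(x, Y(x)) where the combined vector field on ℝᵖ × ℝᵐ is (g, f). Define φ(x, y) = y − Y(x). Then the Lie derivative of φ along the vector field vanishes on the graph {y = Y(x)}, and hence the graph of Y is invariant under the flow. -/
open Set Filter Topology

/-- If Y is C¹ and satisfies the Fenichel invariance equation
DY(x)·g(x,Y(x)) = f(x,Y(x)) for the combined vector field (g, f), then the
Lie derivative of φ(x,y) = y − Y(x) vanishes on the graph {y = Y(x)}, and the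
graph of Y is invariant under the flow. -/
theorem fenichel_darboux_graph_invariance (p m : ℕ)
    (g : (Fin p → ℝ) × (Fin m → ℝ) → (Fin p → ℝ))
    (f : (Fin p → ℝ) × (Fin m → ℝ) → (Fin m → ℝ))
    (hg : LocallyLipschitz g) (hf : LocallyLipschitz f)
    (Y : (Fin p → ℝ) → (Fin m → ℝ)) (hY : ContDiff ℝ 1 Y)
    (hpde : ∀ x, fderiv ℝ Y x (g (x, Y x)) = f (x, Y x)) :
    (∀ x, f (x, Y x) - fderiv ℝ Y x (g (x, Y x)) = 0) ∧
    (∀ γ₁ : ℝ → (Fin p → ℝ), ∀ γ₂ : ℝ → (Fin m → ℝ),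
      (∀ t, HasDerivAt γ₁ (g (γ₁ t, γ₂ t)) t) →
      (∀ t, HasDerivAt γ₂ (f (γ₁ t, γ₂ t)) t) →
      γ₂ 0 = Y (γ₁ 0) → ∀ t : ℝ, γ₂ t = Y (γ₁ t)) := by
  refine ⟨fun x => by rw [hpde x, sub_self], ?_⟩
  intro γ₁ γ₂ hγ₁ hγ₂ h0 t
  have hYd : Differentiable ℝ Y := hY.differentiable one_ne_zero
  -- the difference function
  set w : ℝ → (Fin m → ℝ) := fun t => γ₂ t - Y (γ₁ t) with hwdef
  suffices hS : ∀ t, w t = 0 by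
    have := hS t
    simpa [hwdef, sub_eq_zero] using this
  have hγ₁c : Continuous γ₁ := by
    rw [continuous_iff_continuousAt]; exact fun t => (hγ₁ t).continuousAt
  have hγ₂c : Continuous γ₂ := by
    rw [continuous_iff_continuousAt]; exact fun t => (hγ₂ t).continuousAt
  have hwc : Continuous w := hγ₂c.sub (hYd.continuous.comp hγ₁c)
  have hwderiv : ∀ t, HasDerivAt w
      (f (γ₁ t, γ₂ t) - fderiv ℝ Y (γ₁ t) (g (γ₁ t, γ₂ t))) t := by
    intro t
    have h1 : HasDerivAt (fun s => Y (γ₁ s))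
        (fderiv ℝ Y (γ₁ t) (g (γ₁ t, γ₂ t))) t :=
      (hYd (γ₁ t)).hasFDerivAt.comp_hasDerivAt t (hγ₁ t)
    exact (hγ₂ t).sub h1
  set S : Set ℝ := {t | w t = 0} with hSdef
  have hclosed : IsClosed S := isClosed_eq hwc continuous_const
  have hopen : IsOpen S := by
    rw [isOpen_iff_mem_nhds]
    intro t₀ ht₀
    have hwt₀ : w t₀ = 0 := ht₀
    have hy₀ : γ₂ t₀ = Y (γ₁ t₀) := by
      have := hwt₀; rwa [hwdef, sub_eq_zero] at this
    set P : (Fin p → ℝ) × (Fin m → ℝ) := (γ₁ t₀, Y (γ₁ t₀)) with hPdef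
    obtain ⟨Kf, Uf, hUf, hKf⟩ := hf P
    obtain ⟨Kg, Ug, hUg, hKg⟩ := hg P
    -- bound on the derivative of Y near γ₁ t₀
    set M : ℝ := ‖fderiv ℝ Y (γ₁ t₀)‖ + 1 with hMdef
    have hMpos : 0 < M := by positivity
    set W : Set (Fin p → ℝ) := {x | ‖fderiv ℝ Y x‖ < M} with hWdef
    have hWopen : IsOpen W :=
      isOpen_lt ((hY.continuous_fderiv one_ne_zero).norm) continuous_const
    have hWmem : γ₁ t₀ ∈ W := by simp [hWdef, hMdef]
    -- the non-autonomous vector field for w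
    set V : ℝ → (Fin m → ℝ) → (Fin m → ℝ) := fun t z =>
      f (γ₁ t, z + Y (γ₁ t)) - fderiv ℝ Y (γ₁ t) (g (γ₁ t, z + Y (γ₁ t))) with hVdef
    set s : ℝ → Set (Fin m → ℝ) := fun t =>
      {z | γ₁ t ∈ W ∧ (γ₁ t, z + Y (γ₁ t)) ∈ Uf ∩ Ug} with hsdef
    set K : NNReal := Kf + M.toNNReal * Kg with hKdef
    have hv : ∀ t, LipschitzOnWith K (V t) (s t) := by
      intro t
      apply LipschitzOnWith.of_dist_le_mul
      rintro z₁ ⟨hW₁, hz₁f, hz₁g⟩ z₂ ⟨_, hz₂f, hz₂g⟩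
      have hdprod : dist ((γ₁ t, z₁ + Y (γ₁ t)) : (Fin p → ℝ) × (Fin m → ℝ))
          (γ₁ t, z₂ + Y (γ₁ t)) = dist z₁ z₂ := by
        rw [Prod.dist_eq, dist_self, dist_add_right]
        exact max_eq_right dist_nonneg
      have h1 : dist (f (γ₁ t, z₁ + Y (γ₁ t))) (f (γ₁ t, z₂ + Y (γ₁ t)))
          ≤ (Kf : ℝ) * dist z₁ z₂ := by
        have := hKf.dist_le_mul _ hz₁f _ hz₂f
        rwa [hdprod] at this
      have h2 : dist (fderiv ℝ Y (γ₁ t) (g (γ₁ t, z₁ + Y (γ₁ t))))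
          (fderiv ℝ Y (γ₁ t) (g (γ₁ t, z₂ + Y (γ₁ t))))
          ≤ M * ((Kg : ℝ) * dist z₁ z₂) := by
        have hL := (fderiv ℝ Y (γ₁ t)).lipschitz.dist_le_mul
          (g (γ₁ t, z₁ + Y (γ₁ t))) (g (γ₁ t, z₂ + Y (γ₁ t)))
        have hgd : dist (g (γ₁ t, z₁ + Y (γ₁ t))) (g (γ₁ t, z₂ + Y (γ₁ t)))
            ≤ (Kg : ℝ) * dist z₁ z₂ := by
          have := hKg.dist_le_mul _ hz₁g _ hz₂g
          rwa [hdprod] at this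
        calc dist (fderiv ℝ Y (γ₁ t) (g (γ₁ t, z₁ + Y (γ₁ t))))
              (fderiv ℝ Y (γ₁ t) (g (γ₁ t, z₂ + Y (γ₁ t))))
            ≤ ‖fderiv ℝ Y (γ₁ t)‖ * dist (g (γ₁ t, z₁ + Y (γ₁ t)))
              (g (γ₁ t, z₂ + Y (γ₁ t))) := by
              simpa using hL
          _ ≤ M * ((Kg : ℝ) * dist z₁ z₂) := by
              apply mul_le_mul (le_of_lt hW₁) hgd dist_nonneg (le_of_lt hMpos)
      calc dist (V t z₁) (V t z₂)
          ≤ dist (f (γ₁ t, z₁ + Y (γ₁ t))) (f (γ₁ t, z₂ + Y (γ₁ t)))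
            + dist (fderiv ℝ Y (γ₁ t) (g (γ₁ t, z₁ + Y (γ₁ t))))
              (fderiv ℝ Y (γ₁ t) (g (γ₁ t, z₂ + Y (γ₁ t)))) := dist_sub_sub_le _ _ _ _
        _ ≤ (Kf : ℝ) * dist z₁ z₂ + M * ((Kg : ℝ) * dist z₁ z₂) := add_le_add h1 h2
        _ = ((Kf : ℝ) + M * Kg) * dist z₁ z₂ := by ring
        _ = (K : ℝ) * dist z₁ z₂ := by
            rw [hKdef]
            push_cast
            rw [Real.coe_toNNReal _ (le_of_lt hMpos)]
    -- w and 0 are both solutions of w' = V t w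
    have hcurve : ContinuousAt (fun t => ((γ₁ t, γ₂ t) : (Fin p → ℝ) × (Fin m → ℝ))) t₀ :=
      (hγ₁c.prodMk hγ₂c).continuousAt
    have hcurve' : ContinuousAt
        (fun t => ((γ₁ t, Y (γ₁ t)) : (Fin p → ℝ) × (Fin m → ℝ))) t₀ :=
      (hγ₁c.prodMk (hYd.continuous.comp hγ₁c)).continuousAt
    have hUfg : Uf ∩ Ug ∈ 𝓝 P := inter_mem hUf hUg
    have hmemw : ∀ᶠ t in 𝓝 t₀, HasDerivAt w (V t (w t)) t ∧ w t ∈ s t := by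
      have e1 : ∀ᶠ t in 𝓝 t₀, (γ₁ t, γ₂ t) ∈ Uf ∩ Ug := by
        apply hcurve
        show Uf ∩ Ug ∈ 𝓝 ((γ₁ t₀, γ₂ t₀) : (Fin p → ℝ) × (Fin m → ℝ))
        rw [hy₀]; exact hUfg
      have e2 : ∀ᶠ t in 𝓝 t₀, γ₁ t ∈ W := hγ₁c.continuousAt (hWopen.mem_nhds hWmem)
      filter_upwards [e1, e2] with t h1 h2
      have hwy : w t + Y (γ₁ t) = γ₂ t := by simp [hwdef]
      constructor
      · have := hwderiv t
        convert this using 1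
        rw [hVdef]; simp only [hwy]
      · exact ⟨h2, by rw [hwy]; exact h1⟩
    have hmem0 : ∀ᶠ t in 𝓝 t₀,
        HasDerivAt (fun _ : ℝ => (0 : Fin m → ℝ)) (V t ((fun _ => 0) t)) t ∧
        ((fun _ : ℝ => (0 : Fin m → ℝ)) t) ∈ s t := by
      have e1 : ∀ᶠ t in 𝓝 t₀, (γ₁ t, Y (γ₁ t)) ∈ Uf ∩ Ug := hcurve' hUfg
      have e2 : ∀ᶠ t in 𝓝 t₀, γ₁ t ∈ W := hγ₁c.continuousAt (hWopen.mem_nhds hWmem)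
      filter_upwards [e1, e2] with t h1 h2
      have hV0 : V t 0 = 0 := by
        rw [hVdef]; simp only [zero_add, hpde, sub_self]
      constructor
      · rw [hV0]; exact hasDerivAt_const t 0
      · exact ⟨h2, by rw [zero_add]; exact h1⟩
    have heq : w =ᶠ[𝓝 t₀] fun _ => 0 :=
      ODE_solution_unique_of_eventually (Filter.Eventually.of_forall hv) hmemw hmem0 hwt₀
    exact heq.mono fun t ht => ht
  have hne : S.Nonempty := ⟨0, by simpa [hSdef, hwdef, sub_eq_zero] using h0⟩
  have : S = univ := IsClopen.eq_univ ⟨hclosed, hopen⟩ hne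
  intro t
  have : t ∈ S := this ▸ mem_univ t
  exact this
end
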